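/- Let θ ∈ S₀, i.e. ‖θ‖₂ = 1 and Σ_i θ_i = 0. Then min_i θ_i/c_i < 0, and the point Ψ(θ) := −θ/(min_i θ_i/c_i) + C satisfies: Ψ(θ)_i ≥ 0 for all i, Σ_i Ψ(θ)_i = 1, and Ψ(θ)_{i₀} = 0 for every index i₀ attaining the minimum of θ_i/c_i; that is, Ψ maps S₀ into ∂Δ. -/

import Mathlib

open scoped BigOperators

/-- For `θ ∈ S₀` (unit norm, coordinates summing to zero) and an interior
reference point `C ∈ Δ^{V-1}`, the minimum `m = min_i θ_i / c_i` is negative, and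
`Ψ(θ) := -θ/m + C` has nonnegative coordinates summing to one, with `Ψ(θ)_{i₀} = 0`
for every index `i₀` attaining the minimum; i.e. `Ψ` maps `S₀` into `∂Δ`. -/
theorem stmt1 (V : ℕ) (hV : 2 ≤ V) (C θ : EuclideanSpace ℝ (Fin V))
    (hC0 : ∀ i, 0 < C i) (hC1 : ∑ i, C i = 1)
    (hθn : ‖θ‖ = 1) (hθs : ∑ i, θ i = 0)
    (m : ℝ) (hm : IsLeast {r : ℝ | ∃ i, r = θ i / C i} m) :
    m < 0 ∧
    (∀ i, 0 ≤ ((-(m⁻¹)) • θ + C : EuclideanSpace ℝ (Fin V)) i) ∧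
    (∑ i, ((-(m⁻¹)) • θ + C : EuclideanSpace ℝ (Fin V)) i) = 1 ∧
    (∀ i₀, θ i₀ / C i₀ = m → ((-(m⁻¹)) • θ + C : EuclideanSpace ℝ (Fin V)) i₀ = 0) := by
  obtain ⟨⟨i₁, hmi⟩, hlb⟩ := hm
  -- θ ≠ 0
  have hθne : θ ≠ 0 := by
    intro h; rw [h, norm_zero] at hθn; norm_num at hθn
  -- some coordinate is negative
  have hneg : ∃ i, θ i < 0 := by
    by_contra h
    push_neg at h
    have hall : ∀ i ∈ Finset.univ, θ i = 0 := by
      intro i _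
      exact le_antisymm (by
        have := Finset.sum_eq_zero_iff_of_nonneg (fun j _ => h j) |>.mp hθs i (Finset.mem_univ i)
        exact le_of_eq this) (h i)
    apply hθne
    ext i
    exact hall i (Finset.mem_univ i)
  obtain ⟨j, hj⟩ := hneg
  have hmlt : m < 0 := by
    have hle : m ≤ θ j / C j := hlb ⟨j, rfl⟩
    exact lt_of_le_of_lt hle (div_neg_of_neg_of_pos hj (hC0 j))
  have happ : ∀ i, ((-(m⁻¹)) • θ + C : EuclideanSpace ℝ (Fin V)) i
      = -(m⁻¹) * θ i + C i := fun i => rfl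
  have key : ∀ i, -(m⁻¹) * θ i + C i = C i - θ i / m := by
    intro i; field_simp; ring
  refine ⟨hmlt, ?_, ?_, ?_⟩
  · intro i
    rw [happ, key]
    have h1 : m ≤ θ i / C i := hlb ⟨i, rfl⟩
    have h2 : m * C i ≤ θ i := by
      have := mul_le_mul_of_nonneg_right h1 (le_of_lt (hC0 i))
      rwa [div_mul_cancel₀ _ (ne_of_gt (hC0 i))] at this
    have : θ i / m ≤ C i := by
      rw [div_le_iff_of_neg hmlt, mul_comm]
      exact h2
    linarith
  · simp only [happ]
    rw [Finset.sum_add_distrib, ← Finset.mul_sum, hθs, hC1]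
    ring
  · intro i₀ hi₀
    rw [happ, key]
    have : θ i₀ = m * C i₀ := by
      rw [div_eq_iff (ne_of_gt (hC0 i₀))] at hi₀
      rw [hi₀]
    rw [this, mul_comm, mul_div_assoc, div_self (ne_of_lt hmlt), mul_one, sub_self]
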